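/- With the definitions of the paper's example and L = (X+Y)(X+Y+b), at a point P where F(P) = 0, L(P) = 0, F_X(P) = F_Y(P) ≠ 0, and L_X(P) = L_Y(P), one has B_Y(P) - A_X(P) = -2F_X(P)² - 3L_X(P)F_X(P)F_XY(P) - 2L_Y(P)F_X(P)F_XX(P), and this equals -F_XY(P)G_Y(P)/F_Y(P) - G_XY(P). -/

import Mathlib

open MvPolynomial

noncomputable section

abbrev P2 : Type := MvPolynomial (Fin 2) ℂ

noncomputable def dX (f : P2) : P2 := pderiv 0 f
noncomputable def dY (f : P2) : P2 := pderiv 1 f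

noncomputable def hpol (L F : P2) : P2 :=
  C ((1:ℂ)/2) * dX L * (dX F + dY F) + L * dY (dX F)

noncomputable def kpol (L F : P2) : P2 :=
  - dX F - C ((1:ℂ)/2) * dX L * dY (dX F)

noncomputable def hpol' (L F : P2) : P2 :=
  - dX L * dX F - L * dX (dX F)

noncomputable def kpol' (L F : P2) : P2 :=
  dX F + C ((1:ℂ)/2) * dX L * dX (dX F)

noncomputable def Apol (L F : P2) : P2 := hpol L F * dX F + kpol L F * F

noncomputable def Bpol (L F : P2) : P2 := hpol' L F * dX F + kpol' L F * F

noncomputable def Gpol (L F : P2) : P2 := L * (dX F) ^ 2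

theorem pderiv_comm' {σ R : Type*} [CommSemiring R] (i j : σ) (f : MvPolynomial σ R) :
    pderiv i (pderiv j f) = pderiv j (pderiv i f) := by
  classical
  induction f using MvPolynomial.induction_on with
  | C a => simp
  | add p q hp hq => simp [hp, hq]
  | mul_X p n hp =>
    simp only [pderiv_mul, pderiv_X, Pi.single_apply, map_add, hp]
    split_ifs <;> simp <;> ring

/-- Condition 4 at the bitangency points P₁,…,P₄ :
B_Y - A_X = -2F_X² - 3L_X F_X F_XY - 2L_Y F_X F_XX = -F_XY G_Y/F_Y - G_XY at P. -/
theorem condition4_at_bitangency (F : P2) (b : ℂ)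
    (L : P2) (hLdef : L = (X 1 + X 0) * (X 1 + X 0 + C b))
    (P : Fin 2 → ℂ) (hFP : eval P F = 0) (hLP : eval P L = 0)
    (htan : eval P (dX F) = eval P (dY F)) (hFY : eval P (dY F) ≠ 0)
    (hLsym : eval P (dX L) = eval P (dY L)) :
    eval P (dY (Bpol L F)) - eval P (dX (Apol L F))
        = -2 * (eval P (dX F)) ^ 2
            - 3 * eval P (dX L) * eval P (dX F) * eval P (dY (dX F))
            - 2 * eval P (dY L) * eval P (dX F) * eval P (dX (dX F)) ∧
    -2 * (eval P (dX F)) ^ 2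
        - 3 * eval P (dX L) * eval P (dX F) * eval P (dY (dX F))
        - 2 * eval P (dY L) * eval P (dX F) * eval P (dX (dX F))
      = -(eval P (dY (dX F)) * eval P (dY (Gpol L F))) / eval P (dY F)
          - eval P (dY (dX (Gpol L F))) := by
  subst hLdef
  have hc : ∀ f : P2, pderiv (1 : Fin 2) (pderiv 0 f) = pderiv 0 (pderiv 1 f) :=
    fun f => pderiv_comm' 1 0 f
  simp only [dX, dY, Apol, Bpol, Gpol, hpol, kpol, hpol', kpol', pderiv_mul, map_add, map_mul,
    map_neg, map_sub, map_zero, map_one, pderiv_C, pderiv_X, Pi.single_apply, map_pow,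
    pderiv_pow, hc, eval_add, eval_mul, eval_neg, eval_sub, eval_C, eval_X, eval_pow,
    Fin.isValue, show ∀ i : Fin 2, (pderiv i) (2:P2) = 0 from fun i => by
      rw [show (2:P2) = 1+1 by norm_num]; simp, show ((1:Fin 2) = 0) = False by simp,
    show ((0:Fin 2) = 1) = False by simp, if_true, if_false, eq_self_iff_true,
    mul_zero, zero_mul, mul_one, one_mul, add_zero, zero_add, neg_zero, sub_zero] at *
  set f1 := eval P (pderiv 0 F)
  set f2 := eval P (pderiv 1 F)
  set f11 := eval P (pderiv 0 (pderiv 0 F))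
  set f12 := eval P (pderiv 0 (pderiv 1 F))
  set f112 := eval P (pderiv 0 (pderiv 0 (pderiv 1 F)))
  set p := 2*(P 1 + P 0) + b
  constructor
  · linear_combination
      - 2*(f1*f112 + f11*f12) * hLP
      + (2*f11 + 2*f12 + (2*(P 1+P 0)+b)*f112) * hFP
  · simp only [map_natCast, Nat.cast_ofNat, Nat.cast_one, Nat.add_one_sub_one, map_ofNat, map_one] at *
    field_simp
    linear_combination (2*(P 1+P 0)+b)*f1*f12 * htan
      + (2*f1*f12^2 + 2*f2*f11*f12 + 2*f2*f1*f112
         + f1*f11*f2*(eval P ((pderiv 1) (2:P2)))) * hLP
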